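/- Let ȳ ∈ (0,∞] and let m be a monotone measure on (X,𝒜). Let φ₁, φ₂ : [0,ȳ] → [0,ȳ] be increasing and right-continuous with φ₁(ȳ) = φ₂(ȳ), and let ψ₁, ψ₂ : [0,φ₁(ȳ)] → [0,ȳ] be nondecreasing with ψ₂ left-continuous, such that ψ₁ ≥ ψ₂ pointwise and ψ₂(φ₂(x)) ≤ x ≤ ψ₁(φ₁(x)) for all x ∈ [0,ȳ]. Then the Liapunov type inequality ψ₁(I_{∧,A}(φ₁(f))) ≥ ψ₂(I_{∧,A}(φ₂(f))) holds for every f ∈ F^ȳ and every A ∈ 𝒜. -/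

import Mathlib

open Set ENNReal Filter Topology

noncomputable def uSugeno {X : Type*} (ybar : ℝ≥0∞) (op : ℝ≥0∞ → ℝ≥0∞ → ℝ≥0∞)
    (m : Set X → ℝ≥0∞) (D : Set X) (f : X → ℝ≥0∞) : ℝ≥0∞ :=
  ⨆ t ∈ Set.Iic ybar, op t (m (D ∩ {x | t ≤ f x}))

noncomputable def qInt {X : Type*} (oti : ℝ≥0∞ → ℝ≥0∞ → ℝ≥0∞)
    (m : Set X → ℝ≥0∞) (f : X → ℝ≥0∞) : ℝ≥0∞ :=
  ⨆ t ∈ Set.Iic (1 : ℝ≥0∞), oti (m {x | t ≤ f x}) t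

def Mono2On (op : ℝ≥0∞ → ℝ≥0∞ → ℝ≥0∞) (s t : Set ℝ≥0∞) : Prop :=
  ∀ ⦃a₁⦄, a₁ ∈ s → ∀ ⦃b₁⦄, b₁ ∈ t → ∀ ⦃a₂⦄, a₂ ∈ s → ∀ ⦃b₂⦄, b₂ ∈ t →
    a₁ ≤ a₂ → b₁ ≤ b₂ → op a₁ b₁ ≤ op a₂ b₂

def LeftContOn (g : ℝ≥0∞ → ℝ≥0∞) (s : Set ℝ≥0∞) : Prop :=
  ∀ x ∈ s, ContinuousWithinAt g (Set.Iic x) x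

def RightContOn (g : ℝ≥0∞ → ℝ≥0∞) (s : Set ℝ≥0∞) : Prop :=
  ∀ x ∈ s, ContinuousWithinAt g (Set.Ici x) x

def LeftCont2On (op : ℝ≥0∞ → ℝ≥0∞ → ℝ≥0∞) (s t : Set ℝ≥0∞) : Prop :=
  (∀ b ∈ t, ∀ a ∈ s, ContinuousWithinAt (fun x => op x b) (Set.Iic a) a) ∧
  (∀ a ∈ s, ∀ b ∈ t, ContinuousWithinAt (fun y => op a y) (Set.Iic b) b)

def mRange {X : Type*} [MeasurableSpace X] (m : Set X → ℝ≥0∞) : Set ℝ≥0∞ :=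
  {c | ∃ A : Set X, MeasurableSet A ∧ m A = c}

def MonotoneMeasure {X : Type*} [MeasurableSpace X] (m : Set X → ℝ≥0∞) : Prop :=
  m ∅ = 0 ∧ 0 < m Set.univ ∧
    ∀ ⦃A B : Set X⦄, MeasurableSet A → MeasurableSet B → A ⊆ B → m A ≤ m B

def IsCapacity {X : Type*} [MeasurableSpace X] (m : Set X → ℝ≥0∞) : Prop :=
  m ∅ = 0 ∧ m Set.univ = 1 ∧
    ∀ ⦃A B : Set X⦄, MeasurableSet A → MeasurableSet B → A ⊆ B → m A ≤ m B

def ComonotoneOn {X : Type*} (D : Set X) (f g : X → ℝ≥0∞) : Prop :=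
  ∀ x ∈ D, ∀ y ∈ D, f x < f y → g x ≤ g y

def IsSemicopula (S : ℝ≥0∞ → ℝ≥0∞ → ℝ≥0∞) : Prop :=
  Mono2On S (Set.Iic 1) (Set.Iic 1) ∧
    ∀ a ∈ Set.Iic (1 : ℝ≥0∞), S a 1 = a ∧ S 1 a = a

def MPosDep {X : Type*} (m : Set X → ℝ≥0∞) (tri : ℝ≥0∞ → ℝ≥0∞ → ℝ≥0∞)
    (k : ℝ≥0∞) (A B : Set X) (f g : X → ℝ≥0∞) : Prop :=
  ∀ α ∈ Set.Iic k, ∀ β ∈ Set.Iic k,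
    tri (m (A ∩ {x | α ≤ f x})) (m (B ∩ {x | β ≤ g x})) ≤
      m (A ∩ B ∩ {x | α ≤ f x} ∩ {x | β ≤ g x})

theorem statement14 {X : Type*} [MeasurableSpace X]
    (ybar : ℝ≥0∞) (hybar : 0 < ybar)
    (m : Set X → ℝ≥0∞) (hm : MonotoneMeasure m)
    (φ₁ φ₂ ψ₁ ψ₂ : ℝ≥0∞ → ℝ≥0∞)
    (hφ₁_maps : Set.MapsTo φ₁ (Set.Iic ybar) (Set.Iic ybar))
    (hφ₁_mono : StrictMonoOn φ₁ (Set.Iic ybar))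
    (hφ₁_rc : RightContOn φ₁ (Set.Iic ybar))
    (hφ₂_maps : Set.MapsTo φ₂ (Set.Iic ybar) (Set.Iic ybar))
    (hφ₂_mono : StrictMonoOn φ₂ (Set.Iic ybar))
    (hφ₂_rc : RightContOn φ₂ (Set.Iic ybar))
    (hφ_eq : φ₁ ybar = φ₂ ybar)
    (hψ₁_maps : Set.MapsTo ψ₁ (Set.Iic (φ₁ ybar)) (Set.Iic ybar))
    (hψ₁_mono : MonotoneOn ψ₁ (Set.Iic (φ₁ ybar)))
    (hψ₂_maps : Set.MapsTo ψ₂ (Set.Iic (φ₁ ybar)) (Set.Iic ybar))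
    (hψ₂_mono : MonotoneOn ψ₂ (Set.Iic (φ₁ ybar)))
    (hψ₂_lc : LeftContOn ψ₂ (Set.Iic (φ₁ ybar)))
    (hψ₁₂ : ∀ x ∈ Set.Iic (φ₁ ybar), ψ₂ x ≤ ψ₁ x)
    (hψφ₂ : ∀ x ∈ Set.Iic ybar, ψ₂ (φ₂ x) ≤ x)
    (hψφ₁ : ∀ x ∈ Set.Iic ybar, x ≤ ψ₁ (φ₁ x))
    (f : X → ℝ≥0∞) (hf : Measurable f) (hfy : ∀ x, f x ≤ ybar)
    (A : Set X) (hA : MeasurableSet A) :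
    ψ₂ (uSugeno ybar (fun a b => min a b) m A fun x => φ₂ (f x))
      ≤ ψ₁ (uSugeno ybar (fun a b => min a b) m A fun x => φ₁ (f x)) := by
  classical
  set J₁ : ℝ≥0∞ := uSugeno ybar (fun a b => min a b) m A fun x => φ₁ (f x) with hJ₁def
  set J₂ : ℝ≥0∞ := uSugeno ybar (fun a b => min a b) m A fun x => φ₂ (f x) with hJ₂def
  have hyy : ybar ∈ Set.Iic ybar := Set.mem_Iic.mpr le_rfl
  -- bounds on J₁, J₂
  have hbound : ∀ (φ : ℝ≥0∞ → ℝ≥0∞), StrictMonoOn φ (Set.Iic ybar) →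
      (uSugeno ybar (fun a b => min a b) m A fun x => φ (f x)) ≤ φ ybar := by
    intro φ hmono
    refine iSup₂_le fun s hs => ?_
    rcases le_or_gt s (φ ybar) with h | h
    · exact le_trans (min_le_left _ _) h
    · have hempty : {x | s ≤ φ (f x)} = (∅ : Set X) := by
        ext x
        simp only [Set.mem_setOf_eq, Set.mem_empty_iff_false, iff_false, not_le]
        exact lt_of_le_of_lt (hmono.monotoneOn (hfy x) hyy (hfy x)) h
      simp only [hempty, Set.inter_empty, hm.1]
      simpa using zero_le
  have hJ₁le : J₁ ≤ φ₁ ybar := hbound φ₁ hφ₁_mono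
  have hJ₂le : J₂ ≤ φ₁ ybar := hφ_eq ▸ hbound φ₂ hφ₂_mono
  -- Step 1: pointwise inequality
  have key : ∀ s ∈ Set.Iic ybar,
      ψ₂ (min s (m (A ∩ {x | s ≤ φ₂ (f x)}))) ≤ ψ₁ J₁ := by
    intro s hs
    set S : Set ℝ≥0∞ := {t | t ≤ ybar ∧ s ≤ φ₂ t} with hSdef
    by_cases hS : S.Nonempty
    · set t₀ : ℝ≥0∞ := sInf S with ht₀def
      have ht₀y : t₀ ≤ ybar := by
        obtain ⟨u, hu⟩ := hS
        exact le_trans (sInf_le hu) hu.1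
      have ht₀S : t₀ ∈ S := by
        have hnb : (𝓝[S] t₀).NeBot :=
          mem_closure_iff_nhdsWithin_neBot.mp (csInf_mem_closure hS (OrderBot.bddBelow S))
        have hsub : S ⊆ Set.Ici t₀ := fun t ht => sInf_le ht
        have htend : Filter.Tendsto φ₂ (𝓝[S] t₀) (𝓝 (φ₂ t₀)) :=
          (hφ₂_rc t₀ ht₀y).mono_left (nhdsWithin_mono _ hsub)
        have hphis : s ≤ φ₂ t₀ :=
          ge_of_tendsto htend (eventually_mem_nhdsWithin.mono fun t ht => ht.2)
        exact ⟨ht₀y, hphis⟩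
      have hsφ : s ≤ φ₂ t₀ := ht₀S.2
      have hφ₂t₀d : φ₂ t₀ ≤ φ₁ ybar :=
        hφ_eq ▸ (hφ₂_mono.monotoneOn ht₀y hyy ht₀y)
      have hφ₁t₀d : φ₁ t₀ ≤ φ₁ ybar := hφ₁_mono.monotoneOn ht₀y hyy ht₀y
      have hset : {x | s ≤ φ₂ (f x)} = {x | t₀ ≤ f x} := by
        ext x
        simp only [Set.mem_setOf_eq]
        constructor
        · intro h
          exact sInf_le ⟨hfy x, h⟩
        · intro h
          exact le_trans hsφ (hφ₂_mono.monotoneOn ht₀y (hfy x) h)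
      set m' : ℝ≥0∞ := m (A ∩ {x | t₀ ≤ f x}) with hm'def
      rw [hset]
      -- first: ψ₂ (min s m') ≤ ψ₂ (min (φ₂ t₀) m')
      have h1 : ψ₂ (min s m') ≤ ψ₂ (min (φ₂ t₀) m') := by
        refine hψ₂_mono ?_ ?_ (min_le_min_right _ hsφ)
        · exact le_trans (min_le_left _ _) (le_trans hsφ hφ₂t₀d)
        · exact le_trans (min_le_left _ _) hφ₂t₀d
      -- second: ψ₂ (min (φ₂ t₀) m') ≤ ψ₁ (min (φ₁ t₀) m')
      have h2 : ψ₂ (min (φ₂ t₀) m') ≤ ψ₁ (min (φ₁ t₀) m') := by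
        rcases le_total (φ₂ t₀) m' with h2' | h2' <;>
          rcases le_total (φ₁ t₀) m' with h1' | h1'
        · rw [min_eq_left h2', min_eq_left h1']
          exact le_trans (hψφ₂ t₀ ht₀y) (hψφ₁ t₀ ht₀y)
        · rw [min_eq_left h2', min_eq_right h1']
          exact le_trans (hψ₁₂ _ hφ₂t₀d)
            (hψ₁_mono hφ₂t₀d (le_trans h1' hφ₁t₀d) h2')
        · rw [min_eq_right h2', min_eq_left h1']
          exact le_trans (hψ₂_mono (le_trans h2' hφ₂t₀d) hφ₂t₀d h2')
            (le_trans (hψφ₂ t₀ ht₀y) (hψφ₁ t₀ ht₀y))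
        · rw [min_eq_right h2', min_eq_right h1']
          exact hψ₁₂ _ (le_trans h2' hφ₂t₀d)
      -- third: ψ₁ (min (φ₁ t₀) m') ≤ ψ₁ J₁
      have h3 : ψ₁ (min (φ₁ t₀) m') ≤ ψ₁ J₁ := by
        refine hψ₁_mono (le_trans (min_le_left _ _) hφ₁t₀d) hJ₁le ?_
        have hsetm : {x | φ₁ t₀ ≤ φ₁ (f x)} = {x | t₀ ≤ f x} := by
          ext x
          simp only [Set.mem_setOf_eq]
          exact hφ₁_mono.le_iff_le ht₀y (hfy x)
        have : min (φ₁ t₀) (m (A ∩ {x | φ₁ t₀ ≤ φ₁ (f x)})) ≤ J₁ := by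
          rw [hJ₁def]
          exact le_iSup₂ (f := fun t (_ : t ∈ Set.Iic ybar) =>
            min t (m (A ∩ {x | t ≤ φ₁ (f x)}))) (φ₁ t₀) (hφ₁_maps ht₀y)
        rwa [hsetm] at this
      exact le_trans h1 (le_trans h2 h3)
    · -- S empty: the level set is empty
      have hempty : {x | s ≤ φ₂ (f x)} = (∅ : Set X) := by
        ext x
        simp only [Set.mem_setOf_eq, Set.mem_empty_iff_false, iff_false]
        intro h
        exact hS ⟨f x, hfy x, h⟩
      rw [hempty]
      simp only [Set.inter_empty, hm.1]
      have hz : min s (0 : ℝ≥0∞) = 0 := min_eq_right (zero_le)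
      rw [hz]
      have hφ₂0d : φ₂ 0 ≤ φ₁ ybar := hφ_eq ▸ (hφ₂_mono.monotoneOn (Set.mem_Iic.mpr (zero_le)) hyy (zero_le))
      have : ψ₂ 0 ≤ 0 :=
        le_trans (hψ₂_mono (Set.mem_Iic.mpr (zero_le)) hφ₂0d (zero_le)) (hψφ₂ 0 (Set.mem_Iic.mpr (zero_le)))
      exact le_trans this (zero_le)
  -- Step 2: left continuity of ψ₂ lets us pass ψ₂ inside the sup
  have hB : ψ₂ J₂ ≤ ⨆ s ∈ Set.Iic ybar, ψ₂ (min s (m (A ∩ {x | s ≤ φ₂ (f x)}))) := by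
    set T := ⨆ s ∈ Set.Iic ybar, ψ₂ (min s (m (A ∩ {x | s ≤ φ₂ (f x)}))) with hTdef
    by_contra hcon
    push_neg at hcon
    have hle : ∀ s ∈ Set.Iic ybar, min s (m (A ∩ {x | s ≤ φ₂ (f x)})) ≤ J₂ := by
      intro s hs
      rw [hJ₂def]
      exact le_iSup₂ (f := fun t (_ : t ∈ Set.Iic ybar) =>
        min t (m (A ∩ {x | t ≤ φ₂ (f x)}))) s hs
    have hTle : ∀ s ∈ Set.Iic ybar, ψ₂ (min s (m (A ∩ {x | s ≤ φ₂ (f x)}))) ≤ T := by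
      intro s hs
      exact le_iSup₂ (f := fun t (_ : t ∈ Set.Iic ybar) =>
        ψ₂ (min t (m (A ∩ {x | t ≤ φ₂ (f x)})))) s hs
    by_cases hat : ∃ s ∈ Set.Iic ybar, min s (m (A ∩ {x | s ≤ φ₂ (f x)})) = J₂
    · obtain ⟨s, hs, hgs⟩ := hat
      exact absurd (hgs ▸ hTle s hs) (not_le.mpr hcon)
    · push_neg at hat
      have hpos : (0 : ℝ≥0∞) < J₂ := by
        rcases eq_or_lt_of_le ((zero_le : (0 : ℝ≥0∞) ≤ J₂)) with h | h
        · exfalso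
          refine hat 0 (Set.mem_Iic.mpr (zero_le)) ?_
          refine le_antisymm ?_ ?_
          · exact hle 0 (Set.mem_Iic.mpr (zero_le))
          · rw [← h]; exact zero_le
        · exact h
      have hc := hψ₂_lc J₂ hJ₂le
      have hmem : ψ₂ ⁻¹' (Set.Ioi T) ∈ 𝓝[Set.Iic J₂] J₂ := hc (Ioi_mem_nhds hcon)
      obtain ⟨b, hb, hsub⟩ := (mem_nhdsLE_iff_exists_Ioc_subset' hpos).mp hmem
      have hlt : b < J₂ := hb
      rw [hJ₂def] at hlt
      obtain ⟨s, hs, hbs⟩ : ∃ s ∈ Set.Iic ybar,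
          b < min s (m (A ∩ {x | s ≤ φ₂ (f x)})) := by
        rw [uSugeno] at hlt
        simp only [lt_iSup_iff] at hlt
        obtain ⟨i, hi, hbi⟩ := hlt
        exact ⟨i, hi, hbi⟩
      have hmemIoc : min s (m (A ∩ {x | s ≤ φ₂ (f x)})) ∈ Set.Ioc b J₂ :=
        ⟨hbs, hle s hs⟩
      have : T < ψ₂ (min s (m (A ∩ {x | s ≤ φ₂ (f x)}))) := hsub hmemIoc
      exact absurd (hTle s hs) (not_le.mpr this)
  calc ψ₂ J₂ ≤ ⨆ s ∈ Set.Iic ybar, ψ₂ (min s (m (A ∩ {x | s ≤ φ₂ (f x)}))) := hB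
    _ ≤ ψ₁ J₁ := iSup₂_le key
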